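/- arXiv:2012.14747 — 3 statements merged into one kernel-verified Lean document; each statement's English description precedes it below -/
import Mathlib

section
/- Fix an integer d ≥ 1 and Λ > 0. Let μ_Λ be the product probability measure on ℤ^d → ℝ (with the product σ-algebra) whose factor at n ∈ ℤ^d is the centered Gaussian measure on ℝ with variance v_Λ(n) = exp(−‖n‖²/Λ)/(2(‖n‖²+1)), where ‖n‖ denotes the Euclidean norm of n. Then μ_Λ assigns measure 1 to the set of all a : ℤ^d → ℝ such that the family n ↦ exp(‖n‖)·(a n)² is summable. -/
open MeasureTheory ProbabilityTheory

section Auxiliary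

open Set Real

lemma aux_integrable_exp_neg_mul_abs {b : ℝ} (hb : 0 < b) :
    Integrable (fun x : ℝ => Real.exp (-(b * |x|))) := by
  have hint1 : IntegrableOn (fun x : ℝ => Real.exp (-(b * |x|))) (Ioi 0) volume := by
    refine (exp_neg_integrableOn_Ioi 0 hb).congr_fun (fun x hx => ?_) measurableSet_Ioi
    rw [abs_of_pos hx]; ring_nf
  have hint2 : IntegrableOn (fun x : ℝ => Real.exp (-(b * |x|))) (Iic 0) volume := by
    rw [← Measure.map_neg_eq_self (volume : Measure ℝ)]
    have m : MeasurableEmbedding (fun x : ℝ => -x) := (Homeomorph.neg ℝ).measurableEmbedding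
    rw [m.integrableOn_map_iff]
    simp_rw [Function.comp_def, abs_neg, neg_preimage, neg_Iic, neg_zero]
    exact (integrableOn_Ici_iff_integrableOn_Ioi).mpr hint1
  rw [← integrableOn_univ, ← Set.Iic_union_Ioi (a := (0:ℝ))]
  exact hint2.union hint1

lemma aux_integral_exp_neg_mul_abs {b : ℝ} (hb : 0 < b) :
    ∫ x : ℝ, Real.exp (-(b * |x|)) = 2 * b⁻¹ := by
  have h1 : ∫ x : ℝ, Real.exp (-(b * |x|)) = 2 * ∫ x in Ioi (0:ℝ), Real.exp (-(b * x)) :=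
    integral_comp_abs (f := fun y => Real.exp (-(b * y)))
  have h2 : ∫ x in Ioi (0:ℝ), Real.exp (-(b * x)) = b⁻¹ := by
    have := integral_comp_mul_left_Ioi (fun u : ℝ => Real.exp (-u)) 0 hb
    simp only [mul_zero, integral_exp_neg_Ioi, neg_zero, Real.exp_zero, smul_eq_mul,
      mul_one] at this
    exact this
  rw [h1, h2]

/-- A crude Gaussian tail bound. -/
lemma aux_gauss_tail (v : NNReal) {t : ℝ} (ht : 0 < t) :
    gaussianReal 0 v {x | t ≤ |x|} ≤ ENNReal.ofReal (4 * Real.sqrt v / t) := by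
  have hSmeas : MeasurableSet {x : ℝ | t ≤ |x|} :=
    measurableSet_le measurable_const measurable_abs
  rcases eq_or_ne v 0 with hv | hv
  · subst hv
    rw [gaussianReal_zero_var, Measure.dirac_apply' _ hSmeas]
    have h0 : (0:ℝ) ∉ {x : ℝ | t ≤ |x|} := by simp [ht.not_ge]
    simp [Set.indicator_of_notMem h0]
  · have hv' : 0 < (v : ℝ) := lt_of_le_of_ne v.coe_nonneg (by exact_mod_cast (Ne.symm hv))
    rw [gaussianReal_apply_eq_integral 0 hv]
    apply ENNReal.ofReal_le_ofReal
    set b : ℝ := t / (2 * v) with hbdef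
    have hb : 0 < b := by positivity
    set K : ℝ := (Real.sqrt (2 * Real.pi * v))⁻¹ with hKdef
    have hK0 : 0 ≤ K := by positivity
    have hint : Integrable (fun x : ℝ => K * Real.exp (-(b * |x|))) :=
      (aux_integrable_exp_neg_mul_abs hb).const_mul K
    have hpt : ∀ x ∈ {x : ℝ | t ≤ |x|},
        gaussianPDFReal 0 v x ≤ K * Real.exp (-(b * |x|)) := by
      intro x hx
      simp only [Set.mem_setOf_eq] at hx
      rw [gaussianPDFReal]
      apply mul_le_mul_of_nonneg_left _ hK0
      apply Real.exp_le_exp.mpr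
      have hax : 0 ≤ |x| := abs_nonneg x
      have hsq : (x - 0) ^ 2 = |x| ^ 2 := by rw [sub_zero, sq_abs]
      have key : t * |x| ≤ |x| ^ 2 := by nlinarith
      have h2v : (0:ℝ) < 2 * (v:ℝ) := by positivity
      rw [hsq, hbdef, div_le_iff₀ h2v]
      have heq : -(t / (2 * (v:ℝ)) * |x|) * (2 * (v:ℝ)) = -(t * |x|) := by field_simp
      rw [heq]
      linarith
    calc ∫ x in {x : ℝ | t ≤ |x|}, gaussianPDFReal 0 v x
        ≤ ∫ x in {x : ℝ | t ≤ |x|}, K * Real.exp (-(b * |x|)) := by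
          apply setIntegral_mono_on ((integrable_gaussianPDFReal 0 v).restrict)
            (hint.restrict) hSmeas hpt
      _ ≤ ∫ x : ℝ, K * Real.exp (-(b * |x|)) := by
          apply setIntegral_le_integral hint
          exact ae_of_all _ (fun x => by positivity)
      _ = K * (2 * b⁻¹) := by rw [integral_const_mul, aux_integral_exp_neg_mul_abs hb]
      _ ≤ 4 * Real.sqrt v / t := by
          have hbinv : b⁻¹ = 2 * v / t := by
            rw [hbdef]; field_simp
          rw [hbinv]
          have hKv : (v : ℝ) * K ≤ Real.sqrt v := by
            have hsplit : Real.sqrt (2 * Real.pi * v) = Real.sqrt (2 * Real.pi) * Real.sqrt v := by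
              rw [Real.sqrt_mul (by positivity)]
            have h1 : (1:ℝ) ≤ Real.sqrt (2 * Real.pi) := by
              rw [show (1:ℝ) = Real.sqrt 1 by simp]
              exact Real.sqrt_le_sqrt (by nlinarith [Real.pi_gt_three])
            have hsv : 0 < Real.sqrt v := Real.sqrt_pos.mpr hv'
            have hle : Real.sqrt v ≤ Real.sqrt (2 * Real.pi * v) := by
              rw [hsplit]; nlinarith
            have hKle : K ≤ (Real.sqrt v)⁻¹ := by
              rw [hKdef]
              exact inv_anti₀ hsv hle
            calc (v : ℝ) * K ≤ (v : ℝ) * (Real.sqrt v)⁻¹ :=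
                  mul_le_mul_of_nonneg_left hKle v.coe_nonneg
              _ = (v : ℝ) / Real.sqrt v := by rw [div_eq_mul_inv]
              _ = Real.sqrt v := Real.div_sqrt
          rw [show K * (2 * (2 * (v:ℝ) / t)) = 4 * ((v:ℝ) * K) / t by field_simp; ring]
          gcongr

end Auxiliary

/-- The Euclidean norm of a lattice point `n : Fin d → ℤ`. -/
noncomputable def latticeNorm {d : ℕ} (n : Fin d → ℤ) : ℝ :=
  Real.sqrt (∑ i, ((n i : ℝ)) ^ 2)

/-- The variance `v_Λ(n) = exp(−‖n‖²/Λ)/(2(‖n‖²+1))` of the Gaussian factor at `n`. -/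
noncomputable def varCutoff {d : ℕ} (Λ : ℝ) (n : Fin d → ℤ) : NNReal :=
  (Real.exp (-(latticeNorm n ^ 2) / Λ) / (2 * (latticeNorm n ^ 2 + 1))).toNNReal

/-- `μ` is the product over `n : Fin d → ℤ` of the centered Gaussian measures on `ℝ` with
variances `v n`, characterized through its values on all measurable cylinder sets. -/
def IsProductGaussian {d : ℕ} (μ : Measure ((Fin d → ℤ) → ℝ))
    (v : (Fin d → ℤ) → NNReal) : Prop :=
  ∀ (F : Finset (Fin d → ℤ)) (B : (Fin d → ℤ) → Set ℝ), (∀ n, MeasurableSet (B n)) →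
    μ {a | ∀ n ∈ F, a n ∈ B n} = ∏ n ∈ F, gaussianReal 0 (v n) (B n)

section Summability

lemma aux_summable_int_exp {c : ℝ} (hc : 0 < c) :
    Summable (fun z : ℤ => Real.exp (-(c * |(z : ℝ)|))) := by
  have key : Summable (fun n : ℕ => (Real.exp (-c)) ^ n) :=
    summable_geometric_of_lt_one (Real.exp_nonneg _) (Real.exp_lt_one_iff.mpr (by linarith))
  apply Summable.of_nat_of_neg
  · refine key.congr fun n => ?_
    rw [← Real.exp_nat_mul]
    congr 1
    push_cast
    rw [abs_of_nonneg (by positivity)]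
    ring
  · refine key.congr fun n => ?_
    rw [← Real.exp_nat_mul]
    congr 1
    push_cast
    rw [abs_neg, abs_of_nonneg (by positivity)]
    ring

lemma aux_summable_pi_exp (m : ℕ) {c : ℝ} (hc : 0 < c) :
    Summable (fun n : Fin m → ℤ => ∏ i, Real.exp (-(c * |((n i : ℤ) : ℝ)|))) := by
  induction m with
  | zero => exact .of_finite
  | succ m ih =>
    have hprod : Summable (fun p : ℤ × (Fin m → ℤ) =>
        Real.exp (-(c * |((p.1 : ℤ) : ℝ)|)) * ∏ i, Real.exp (-(c * |((p.2 i : ℤ) : ℝ)|))) := by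
      apply (aux_summable_int_exp hc).mul_of_nonneg ih
      · intro z; positivity
      · intro f; exact Finset.prod_nonneg fun i _ => Real.exp_nonneg _
    let e : ℤ × (Fin m → ℤ) ≃ (Fin (m + 1) → ℤ) :=
      (Fin.consEquiv (fun _ : Fin (m + 1) => ℤ))
    rw [← e.summable_iff]
    refine hprod.congr fun p => ?_
    simp only [Function.comp_apply]
    have he : e p = Fin.cons p.1 p.2 := rfl
    rw [he, Fin.prod_univ_succ]
    simp

lemma aux_summable_exp_neg_latticeNorm {d : ℕ} (hd : 1 ≤ d) :
    Summable (fun n : Fin d → ℤ => Real.exp (-latticeNorm n)) := by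
  have hd' : (0:ℝ) < d := by exact_mod_cast hd
  refine Summable.of_nonneg_of_le (fun n => Real.exp_nonneg _) (fun n => ?_)
    (aux_summable_pi_exp d (c := 1 / d) (by positivity))
  rw [← Real.exp_sum]
  apply Real.exp_le_exp.mpr
  have hL0 : 0 ≤ latticeNorm n := Real.sqrt_nonneg _
  have h1 : ∀ i, |((n i : ℤ) : ℝ)| ≤ latticeNorm n := by
    intro i
    rw [latticeNorm, show |((n i : ℤ) : ℝ)| = Real.sqrt (((n i : ℤ) : ℝ) ^ 2) by
      rw [Real.sqrt_sq_eq_abs]]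
    exact Real.sqrt_le_sqrt
      (Finset.single_le_sum (f := fun j => ((n j : ℤ) : ℝ) ^ 2)
        (fun j _ => sq_nonneg _) (Finset.mem_univ i))
  have hsum : ∑ i, |((n i : ℤ) : ℝ)| ≤ d * latticeNorm n := by
    calc ∑ i, |((n i : ℤ) : ℝ)| ≤ ∑ _i : Fin d, latticeNorm n :=
          Finset.sum_le_sum fun i _ => h1 i
      _ = d * latticeNorm n := by
          rw [Finset.sum_const, Finset.card_univ, Fintype.card_fin, nsmul_eq_mul]
  have heq : ∑ i, -((1 / (d:ℝ)) * |((n i : ℤ) : ℝ)|)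
      = -((1 / (d:ℝ)) * ∑ i, |((n i : ℤ) : ℝ)|) := by
    rw [Finset.mul_sum, Finset.sum_neg_distrib]
  rw [heq, neg_le_neg_iff]
  calc (1 / (d:ℝ)) * ∑ i, |((n i : ℤ) : ℝ)| ≤ (1 / (d:ℝ)) * (d * latticeNorm n) := by
        gcongr
    _ = latticeNorm n := by field_simp

end Summability

/-- The product Gaussian measure `μ_Λ` gives full measure to the set of `a : ℤ^d → ℝ`
such that `n ↦ exp(‖n‖) (a n)²` is summable. -/
theorem gaussian_ae_summable_expNorm_sq {d : ℕ} (hd : 1 ≤ d) {Λ : ℝ} (hΛ : 0 < Λ)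
    (μ : Measure ((Fin d → ℤ) → ℝ)) (hμ : IsProductGaussian μ (varCutoff Λ)) :
    μ {a : (Fin d → ℤ) → ℝ | Summable fun n => Real.exp (latticeNorm n) * (a n) ^ 2} = 1 := by
  classical
  set B : (Fin d → ℤ) → Set ℝ := fun n => {x | Real.exp (-latticeNorm n) ≤ |x|} with hBdef
  have hBmeas : ∀ n, MeasurableSet (B n) :=
    fun n => measurableSet_le measurable_const measurable_abs
  set s : (Fin d → ℤ) → Set ((Fin d → ℤ) → ℝ) := fun n => {a | a n ∈ B n} with hsdef
  have hμs : ∀ n, μ (s n) = gaussianReal 0 (varCutoff Λ n) (B n) := by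
    intro n
    have h := hμ {n} B hBmeas
    rw [Finset.prod_singleton] at h
    rw [← h]
    congr 1
    ext a
    simp [hsdef]
  have hL0 : ∀ n : Fin d → ℤ, 0 ≤ latticeNorm n := fun n => Real.sqrt_nonneg _
  have hvco : ∀ n : Fin d → ℤ, ((varCutoff Λ n : NNReal) : ℝ)
      = Real.exp (-(latticeNorm n ^ 2) / Λ) / (2 * (latticeNorm n ^ 2 + 1)) := by
    intro n
    rw [varCutoff, Real.coe_toNNReal]
    positivity
  have hsqbd : ∀ n : Fin d → ℤ,
      Real.sqrt (varCutoff Λ n) ≤ Real.exp (-(latticeNorm n ^ 2) / (2 * Λ)) := by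
    intro n
    have h1 : ((varCutoff Λ n : NNReal) : ℝ) ≤ Real.exp (-(latticeNorm n ^ 2) / Λ) := by
      rw [hvco n]
      have hden : (1:ℝ) ≤ 2 * (latticeNorm n ^ 2 + 1) := by nlinarith [sq_nonneg (latticeNorm n)]
      calc Real.exp (-(latticeNorm n ^ 2) / Λ) / (2 * (latticeNorm n ^ 2 + 1))
          ≤ Real.exp (-(latticeNorm n ^ 2) / Λ) / 1 := by
            gcongr
        _ = Real.exp (-(latticeNorm n ^ 2) / Λ) := div_one _
    have h2 : Real.exp (-(latticeNorm n ^ 2) / Λ)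
        = (Real.exp (-(latticeNorm n ^ 2) / (2 * Λ))) ^ 2 := by
      have h3 : -(latticeNorm n ^ 2) / Λ
          = -(latticeNorm n ^ 2) / (2 * Λ) + -(latticeNorm n ^ 2) / (2 * Λ) := by
        field_simp
        ring
      rw [h3, Real.exp_add]
      ring
    calc Real.sqrt (varCutoff Λ n) ≤ Real.sqrt (Real.exp (-(latticeNorm n ^ 2) / Λ)) :=
          Real.sqrt_le_sqrt h1
      _ = Real.exp (-(latticeNorm n ^ 2) / (2 * Λ)) := by
          rw [h2, Real.sqrt_sq (Real.exp_nonneg _)]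
  set C : ℝ := 4 * Real.exp (9 * Λ / 2) with hCdef
  have hbound : ∀ n, μ (s n) ≤ ENNReal.ofReal (C * Real.exp (-latticeNorm n)) := by
    intro n
    rw [hμs n]
    refine le_trans (aux_gauss_tail _ (Real.exp_pos _)) (ENNReal.ofReal_le_ofReal ?_)
    set L := latticeNorm n with hLdef
    have hL : 0 ≤ L := hL0 n
    calc 4 * Real.sqrt (varCutoff Λ n) / Real.exp (-L)
        ≤ 4 * Real.exp (-(L ^ 2) / (2 * Λ)) / Real.exp (-L) := by
          gcongr
          exact hsqbd n
      _ = 4 * Real.exp (-(L ^ 2) / (2 * Λ) + L) := by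
          rw [mul_div_assoc, ← Real.exp_sub]
          ring_nf
      _ ≤ C * Real.exp (-L) := by
          rw [hCdef, mul_assoc, ← Real.exp_add]
          gcongr 4 * Real.exp ?_
          have h4 : -(L ^ 2) / (2 * Λ) ≤ 9 * Λ / 2 - 2 * L := by
            rw [div_le_iff₀ (by positivity : (0:ℝ) < 2 * Λ)]
            nlinarith [sq_nonneg (L - 2 * Λ)]
          linarith
  have hsummable : Summable (fun n : Fin d → ℤ => C * Real.exp (-latticeNorm n)) :=
    (aux_summable_exp_neg_latticeNorm hd).mul_left C
  have htsum : ∑' n, μ (s n) ≠ ⊤ := by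
    apply ne_top_of_le_ne_top _ (ENNReal.tsum_le_tsum hbound)
    have hC0 : 0 ≤ C := by rw [hCdef]; positivity
    rw [← ENNReal.ofReal_tsum_of_nonneg (fun n => mul_nonneg hC0 (Real.exp_nonneg _)) hsummable]
    exact ENNReal.ofReal_ne_top
  have hae : ∀ᵐ a ∂μ, {n | a ∈ s n}.Finite := MeasureTheory.ae_finite_setOf_mem htsum
  have hsub : ∀ a : (Fin d → ℤ) → ℝ, {n | a ∈ s n}.Finite →
      Summable (fun n => Real.exp (latticeNorm n) * (a n) ^ 2) := by
    intro a hfin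
    rw [← Set.Finite.summable_compl_iff hfin]
    refine Summable.of_nonneg_of_le (fun p => mul_nonneg (Real.exp_nonneg _) (sq_nonneg _)) (fun p => ?_)
      ((aux_summable_exp_neg_latticeNorm hd).subtype _)
    obtain ⟨n, hn⟩ := p
    simp only [Set.mem_compl_iff, Set.mem_setOf_eq, hsdef, hBdef] at hn
    push_neg at hn
    have h2 : (a n) ^ 2 ≤ (Real.exp (-latticeNorm n)) ^ 2 := by
      rw [← sq_abs]
      exact pow_le_pow_left₀ (abs_nonneg _) hn.le 2
    calc Real.exp (latticeNorm n) * (a n) ^ 2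
        ≤ Real.exp (latticeNorm n) * (Real.exp (-latticeNorm n)) ^ 2 := by
          gcongr
      _ = Real.exp (-latticeNorm n) := by
          rw [sq, ← Real.exp_add, ← Real.exp_add]
          ring_nf
  have hae2 : ∀ᵐ a ∂μ,
      a ∈ {a : (Fin d → ℤ) → ℝ | Summable fun n => Real.exp (latticeNorm n) * (a n) ^ 2} :=
    hae.mono fun a ha => hsub a ha
  have h0 : μ {a : (Fin d → ℤ) → ℝ |
      Summable fun n => Real.exp (latticeNorm n) * (a n) ^ 2}ᶜ = 0 := by
    exact mem_ae_iff.mp hae2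
  have huniv : μ Set.univ = 1 := by
    have h := hμ ∅ (fun _ => Set.univ) (fun _ => MeasurableSet.univ)
    simpa using h
  apply le_antisymm
  · rw [← huniv]
    exact measure_mono (Set.subset_univ _)
  · have h := measure_union_le (μ := μ)
      {a : (Fin d → ℤ) → ℝ | Summable fun n => Real.exp (latticeNorm n) * (a n) ^ 2}
      {a : (Fin d → ℤ) → ℝ | Summable fun n => Real.exp (latticeNorm n) * (a n) ^ 2}ᶜ
    rw [Set.union_compl_self, huniv, h0, add_zero] at h
    exact h
end

section
/- Fix an integer d ≥ 1, Λ > Λ' > 0 and b ∈ ℝ. Let S : (ℤ^d → ℝ) → ℝ be measurable, square-integrable with respect to μ_Λ, and satisfy S ≥ b μ_Λ-almost everywhere. Then the integration-out map I_{Λ,Λ'}(S)(ψ) = −log ∫ exp(−S(φ + ψ)) dμ_{Λ,Λ'}(φ) is defined for μ_{Λ'}-almost every ψ, satisfies I_{Λ,Λ'}(S) ≥ b μ_{Λ'}-almost everywhere, is square-integrable with respect to μ_{Λ'}, and √(∫ (I_{Λ,Λ'}(S)(ψ))² dμ_{Λ'}(ψ)) ≤ |b| + √(∫ S(χ)² dμ_Λ(χ)).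 -/
open MeasureTheory ProbabilityTheory

/-- The variance `v_{Λ,Λ'}(n) = (exp(−‖n‖²/Λ) − exp(−‖n‖²/Λ'))/(2(‖n‖²+1))`. -/
noncomputable def varCutoffDiff {d : ℕ} (Λ Λ' : ℝ) (n : Fin d → ℤ) : NNReal :=
  ((Real.exp (-(latticeNorm n ^ 2) / Λ) - Real.exp (-(latticeNorm n ^ 2) / Λ')) /
    (2 * (latticeNorm n ^ 2 + 1))).toNNReal

/-- The integration-out map of the renormalization group:
`I(S)(ψ) = −log ∫ exp(−S(φ+ψ)) dμ(φ)`, where `μ` is the fluctuation measure. -/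
noncomputable def integrateOut {d : ℕ} (μ : Measure ((Fin d → ℤ) → ℝ))
    (S : ((Fin d → ℤ) → ℝ) → ℝ) (ψ : (Fin d → ℤ) → ℝ) : ℝ :=
  -Real.log (∫ φ, Real.exp (-S (φ + ψ)) ∂μ)


section Aux
open Real

lemma gaussianPDFReal_conv_aux {v w : NNReal} (hv : v ≠ 0) (hw : w ≠ 0) (y x : ℝ) :
    gaussianPDFReal 0 v x * gaussianPDFReal x w y =
      gaussianPDFReal 0 (v + w) y *
        gaussianPDFReal ((v : ℝ) * y / ((v : ℝ) + (w : ℝ))) (v * w / (v + w)) x := by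
  have hV : (0:ℝ) < v := lt_of_le_of_ne v.coe_nonneg (by exact_mod_cast Ne.symm hv)
  have hW : (0:ℝ) < w := lt_of_le_of_ne w.coe_nonneg (by exact_mod_cast Ne.symm hw)
  have hVW : (0:ℝ) < (v:ℝ) + w := by positivity
  simp only [gaussianPDFReal, NNReal.coe_add, NNReal.coe_div, NNReal.coe_mul, sub_zero]
  rw [mul_mul_mul_comm, mul_mul_mul_comm ((√(2 * π * ((v:ℝ) + w)))⁻¹)]
  congr 1
  · rw [← mul_inv, ← mul_inv, ← Real.sqrt_mul (by positivity), ← Real.sqrt_mul (by positivity)]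
    congr 2
    field_simp
  · rw [← Real.exp_add, ← Real.exp_add]
    congr 1
    field_simp
    ring

set_option maxHeartbeats 1000000 in
lemma gaussianPDF_conv {v w : NNReal} (hv : v ≠ 0) (hw : w ≠ 0) (y : ℝ) :
    ∫⁻ x, gaussianPDF 0 v x * gaussianPDF x w y = gaussianPDF 0 (v + w) y := by
  have hσ : v * w / (v + w) ≠ 0 := by
    have hv' : 0 < v := pos_iff_ne_zero.2 hv
    have hw' : 0 < w := pos_iff_ne_zero.2 hw
    exact (div_pos (mul_pos hv' hw') (by positivity)).ne'
  calc ∫⁻ x, gaussianPDF 0 v x * gaussianPDF x w y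
      = ∫⁻ x, ENNReal.ofReal (gaussianPDFReal 0 (v + w) y *
          gaussianPDFReal ((v : ℝ) * y / ((v : ℝ) + (w : ℝ))) (v * w / (v + w)) x) := by
        simp_rw [gaussianPDF, ← ENNReal.ofReal_mul (gaussianPDFReal_nonneg 0 v _)]
        exact lintegral_congr fun x => by rw [gaussianPDFReal_conv_aux hv hw y x]
    _ = ∫⁻ x, ENNReal.ofReal (gaussianPDFReal 0 (v + w) y) *
          ENNReal.ofReal (gaussianPDFReal ((v : ℝ) * y / ((v : ℝ) + (w : ℝ)))
            (v * w / (v + w)) x) := by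
        simp_rw [ENNReal.ofReal_mul (gaussianPDFReal_nonneg _ _ _)]
    _ = ENNReal.ofReal (gaussianPDFReal 0 (v + w) y) := by
        rw [lintegral_const_mul _ (measurable_gaussianPDFReal _ _).ennreal_ofReal,
          lintegral_gaussianPDFReal_eq_one _ hσ, mul_one]
    _ = gaussianPDF 0 (v + w) y := rfl

lemma gaussianReal_conv (v w : NNReal) :
    Measure.map (fun p : ℝ × ℝ => p.1 + p.2) ((gaussianReal 0 v).prod (gaussianReal 0 w)) =
      gaussianReal 0 (v + w) := by
  by_cases hv : v = 0
  · subst hv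
    rw [gaussianReal_zero_var, Measure.dirac_prod,
      Measure.map_map (by fun_prop) measurable_prodMk_left]
    simp only [Function.comp_def, zero_add]
    rw [Measure.map_id']
  by_cases hw : w = 0
  · subst hw
    rw [gaussianReal_zero_var, Measure.prod_dirac,
      Measure.map_map (by fun_prop) (measurable_prodMk_right)]
    simp only [Function.comp_def, add_zero]
    rw [Measure.map_id']
  have hvw : v + w ≠ 0 := by positivity
  ext s hs
  rw [Measure.map_apply measurable_add hs,
    Measure.prod_apply (measurable_add hs)]
  have h1 : ∀ x : ℝ, (Prod.mk x ⁻¹' ((fun p : ℝ × ℝ => p.1 + p.2) ⁻¹' s)) = (x + ·) ⁻¹' s :=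
    fun x => rfl
  have h2 : ∀ x : ℝ, gaussianReal 0 w ((x + ·) ⁻¹' s) = gaussianReal x w s := by
    intro x
    rw [← Measure.map_apply (measurable_const_add x) hs, gaussianReal_map_const_add, zero_add]
  simp_rw [h1, h2]
  have hmeas_pair : Measurable (fun q : ℝ × ℝ => gaussianPDF q.1 w q.2) := by
    apply Measurable.ennreal_ofReal
    unfold gaussianPDFReal
    fun_prop
  have hker : Measurable fun x => gaussianReal x w s := by
    simp_rw [gaussianReal_apply _ hw s]
    have : ∀ x : ℝ, ∫⁻ y in s, gaussianPDF x w y =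
        ∫⁻ y, s.indicator (fun y => gaussianPDF x w y) y := fun x =>
      (lintegral_indicator hs _).symm
    simp_rw [this]
    apply Measurable.lintegral_prod_right'
      (f := fun q : ℝ × ℝ => s.indicator (fun y => gaussianPDF q.1 w y) q.2)
    have heq : (fun q : ℝ × ℝ => s.indicator (fun y => gaussianPDF q.1 w y) q.2) =
        (Prod.snd ⁻¹' s).indicator (fun q : ℝ × ℝ => gaussianPDF q.1 w q.2) := by
      ext q
      by_cases h : q.2 ∈ s <;> simp [Set.indicator_apply, h]
    rw [heq]
    exact hmeas_pair.indicator (hs.preimage measurable_snd)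
  rw [gaussianReal_of_var_ne_zero _ hv,
    lintegral_withDensity_eq_lintegral_mul _ (measurable_gaussianPDF 0 v) hker]
  simp_rw [gaussianReal_apply _ hw s]
  simp only [Pi.mul_apply]
  have h3 : ∀ x : ℝ, gaussianPDF 0 v x * ∫⁻ y in s, gaussianPDF x w y =
      ∫⁻ y in s, gaussianPDF 0 v x * gaussianPDF x w y := fun x =>
    (lintegral_const_mul _ (hmeas_pair.comp (measurable_prodMk_left (x := x)))).symm
  simp_rw [h3]
  rw [lintegral_lintegral_swap]
  · rw [gaussianReal_apply _ hvw s]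
    refine lintegral_congr fun y => ?_
    exact gaussianPDF_conv hv hw y
  · exact ((measurable_gaussianPDF 0 v).comp measurable_fst |>.mul
      (hmeas_pair)).aemeasurable

namespace IsProductGaussian

variable {d : ℕ} {μ ν : Measure ((Fin d → ℤ) → ℝ)} {v v₁ v₂ : (Fin d → ℤ) → NNReal}

lemma isProbabilityMeasure (h : IsProductGaussian μ v) : IsProbabilityMeasure μ := by
  constructor
  have := h ∅ (fun _ => Set.univ) (fun _ => MeasurableSet.univ)
  simpa using this

lemma map_restrict (h : IsProductGaussian μ v) (F : Finset (Fin d → ℤ)) :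
    Measure.map F.restrict μ = Measure.pi (fun n : F => gaussianReal 0 (v n)) := by
  classical
  refine (Measure.pi_eq fun s hs => ?_).symm
  rw [Measure.map_apply (Finset.measurable_restrict F) (MeasurableSet.univ_pi hs)]
  set B : (Fin d → ℤ) → Set ℝ := fun n => if hn : n ∈ F then s ⟨n, hn⟩ else Set.univ with hB
  have hBm : ∀ n, MeasurableSet (B n) := by
    intro n
    by_cases hn : n ∈ F <;> simp only [hB, hn, dif_pos, dif_neg, not_false_iff]
    · exact hs _
    · exact MeasurableSet.univ
  have hpre : F.restrict ⁻¹' Set.pi Set.univ s = {a | ∀ n ∈ F, a n ∈ B n} := by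
    ext a
    simp only [Set.mem_preimage, Set.mem_univ_pi, Set.mem_setOf_eq, Finset.restrict]
    constructor
    · intro hmem n hn
      simpa only [hB, dif_pos hn] using hmem ⟨n, hn⟩
    · intro hmem n
      have := hmem n.1 n.2
      simpa only [hB, dif_pos n.2] using this
  rw [hpre, h F B hBm]
  rw [← Finset.prod_attach F (fun n => gaussianReal 0 (v n) (B n)), Finset.univ_eq_attach]
  refine Finset.prod_congr rfl fun n _ => ?_
  simp only [hB, dif_pos n.2]

lemma unique (hμ : IsProductGaussian μ v) (hν : IsProductGaussian ν v) : μ = ν := by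
  have h1 := hμ.isProbabilityMeasure
  have h2 := hν.isProbabilityMeasure
  refine ext_of_generate_finite (measurableCylinders fun _ : Fin d → ℤ => ℝ)
    generateFrom_measurableCylinders.symm isPiSystem_measurableCylinders ?_ (by simp)
  intro t ht
  obtain ⟨F, S, hS, rfl⟩ := (mem_measurableCylinders t).1 ht
  rw [cylinder, ← Measure.map_apply (Finset.measurable_restrict F) hS,
    ← Measure.map_apply (Finset.measurable_restrict F) hS,
    hμ.map_restrict F, hν.map_restrict F]

lemma conv (h₁ : IsProductGaussian μ v₁) (h₂ : IsProductGaussian ν v₂) :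
    IsProductGaussian
      (Measure.map (fun p => p.1 + p.2) (μ.prod ν)) (fun n => v₁ n + v₂ n) := by
  classical
  have hP1 := h₁.isProbabilityMeasure
  have hP2 := h₂.isProbabilityMeasure
  have hadd : Measurable (fun p : ((Fin d → ℤ) → ℝ) × ((Fin d → ℤ) → ℝ) => p.1 + p.2) :=
    measurable_pi_lambda _ fun n =>
      ((measurable_pi_apply n).comp measurable_fst).add
        ((measurable_pi_apply n).comp measurable_snd)
  intro F B hB
  have hset : MeasurableSet {a : (Fin d → ℤ) → ℝ | ∀ n ∈ F, a n ∈ B n} := by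
    have : {a : (Fin d → ℤ) → ℝ | ∀ n ∈ F, a n ∈ B n} =
        ⋂ n ∈ F, (fun a : (Fin d → ℤ) → ℝ => a n) ⁻¹' (B n) := by
      ext a; simp
    rw [this]
    exact MeasurableSet.biInter F.countable_toSet
      (fun n _ => (measurable_pi_apply n) (hB n))
  rw [Measure.map_apply hadd hset]
  -- reduce to finite dimensions
  have hpre : (fun p : ((Fin d → ℤ) → ℝ) × ((Fin d → ℤ) → ℝ) => p.1 + p.2) ⁻¹'
        {a | ∀ n ∈ F, a n ∈ B n} =
      Prod.map F.restrict F.restrict ⁻¹'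
        {q : (F → ℝ) × (F → ℝ) | ∀ n : F, q.1 n + q.2 n ∈ B n} := by
    ext p
    simp only [Set.mem_preimage, Set.mem_setOf_eq, Prod.map, Finset.restrict, Pi.add_apply]
    constructor
    · intro hmem n; exact hmem n.1 n.2
    · intro hmem n hn; exact hmem ⟨n, hn⟩
  rw [hpre]
  have hsetF : MeasurableSet {q : (F → ℝ) × (F → ℝ) | ∀ n : F, q.1 n + q.2 n ∈ B n} := by
    have : {q : (F → ℝ) × (F → ℝ) | ∀ n : F, q.1 n + q.2 n ∈ B n} =
        ⋂ n : F, {q : (F → ℝ) × (F → ℝ) | q.1 n + q.2 n ∈ B (n : Fin d → ℤ)} := by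
      ext q; simp
    rw [this]
    exact MeasurableSet.iInter fun n =>
      (((measurable_pi_apply n).comp measurable_fst).add
        ((measurable_pi_apply n).comp measurable_snd)) (hB n)
  rw [← Measure.map_apply ((Finset.measurable_restrict F).prodMap
      (Finset.measurable_restrict F)) hsetF]
  rw [← Measure.map_prod_map _ _ (Finset.measurable_restrict F) (Finset.measurable_restrict F),
    h₁.map_restrict F, h₂.map_restrict F]
  rw [← (measurePreserving_arrowProdEquivProdArrow ℝ ℝ F
      (fun n : F => gaussianReal 0 (v₁ n)) (fun n : F => gaussianReal 0 (v₂ n))).map_eq,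
    Measure.map_apply (MeasurableEquiv.measurable _) hsetF]
  have hpre2 : (MeasurableEquiv.arrowProdEquivProdArrow ℝ ℝ F) ⁻¹'
        {q : (F → ℝ) × (F → ℝ) | ∀ n : F, q.1 n + q.2 n ∈ B n} =
      Set.pi Set.univ (fun n : F => (fun r : ℝ × ℝ => r.1 + r.2) ⁻¹' (B n)) := by
    ext f
    simp [MeasurableEquiv.arrowProdEquivProdArrow, Equiv.arrowProdEquivProdArrow]
  rw [hpre2, Measure.pi_pi]
  rw [← Finset.prod_attach F (fun n => gaussianReal 0 (v₁ n + v₂ n) (B n)),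
    Finset.univ_eq_attach]
  refine Finset.prod_congr rfl fun n _ => ?_
  rw [← gaussianReal_conv (v₁ n) (v₂ n), Measure.map_apply measurable_add (hB n)]

end IsProductGaussian

lemma varCutoff_add {d : ℕ} {Λ Λ' : ℝ} (hΛ' : 0 < Λ') (hΛ : Λ' < Λ) (n : Fin d → ℤ) :
    varCutoffDiff Λ Λ' n + varCutoff Λ' n = varCutoff Λ n := by
  have hx : (0:ℝ) ≤ latticeNorm n ^ 2 := sq_nonneg _
  have hD : (0:ℝ) < 2 * (latticeNorm n ^ 2 + 1) := by positivity
  have hle : Real.exp (-(latticeNorm n ^ 2) / Λ') ≤ Real.exp (-(latticeNorm n ^ 2) / Λ) := by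
    apply Real.exp_le_exp.2
    rw [neg_div, neg_div, neg_le_neg_iff]
    exact div_le_div_of_nonneg_left hx hΛ' hΛ.le
  have h1 : (0:ℝ) ≤ (Real.exp (-(latticeNorm n ^ 2) / Λ) -
      Real.exp (-(latticeNorm n ^ 2) / Λ')) / (2 * (latticeNorm n ^ 2 + 1)) :=
    div_nonneg (by linarith) hD.le
  have h2 : (0:ℝ) ≤ Real.exp (-(latticeNorm n ^ 2) / Λ') / (2 * (latticeNorm n ^ 2 + 1)) :=
    div_nonneg (Real.exp_pos _).le hD.le
  rw [varCutoffDiff, varCutoff, varCutoff, ← Real.toNNReal_add h1 h2, ← add_div,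
    sub_add_cancel]

lemma sq_integral_le {α : Type*} {m : MeasurableSpace α} {μ : Measure α}
    [IsProbabilityMeasure μ] {f : α → ℝ} (h1 : Integrable f μ)
    (h2 : Integrable (fun x => f x ^ 2) μ) :
    (∫ x, f x ∂μ) ^ 2 ≤ ∫ x, f x ^ 2 ∂μ := by
  set c := ∫ x, f x ∂μ with hc
  have h4 : (0:ℝ) ≤ ∫ x, (f x - c) ^ 2 ∂μ := integral_nonneg fun x => sq_nonneg _
  have h5 : ∫ x, (f x - c) ^ 2 ∂μ = (∫ x, f x ^ 2 ∂μ) - c ^ 2 := by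
    have heq : (fun x => (f x - c) ^ 2) = fun x => f x ^ 2 - (2 * c) * f x + c ^ 2 := by
      ext x; ring
    have hint1 : Integrable (fun x => f x ^ 2 - 2 * c * f x) μ := h2.sub (h1.const_mul _)
    have hint2 : Integrable (fun x => 2 * c * f x) μ := h1.const_mul _
    rw [heq, integral_add hint1 (integrable_const _),
      integral_sub h2 hint2, integral_const_mul, integral_const, probReal_univ]
    simp [← hc]
    ring
  linarith

end Aux

set_option maxHeartbeats 1000000 in
/-- For `S` measurable, square-integrable w.r.t. `μ_Λ`, and bounded below by `b` a.e., the
integration-out map `I_{Λ,Λ'}(S)` is well defined for a.e. `ψ`, is bounded below by `b`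
a.e., is square-integrable w.r.t. `μ_{Λ'}`, and
`√(∫ I_{Λ,Λ'}(S)² dμ_{Λ'}) ≤ |b| + √(∫ S² dμ_Λ)`. -/
theorem integrateOut_memLp_of_bddBelow {d : ℕ} (hd : 1 ≤ d) {Λ Λ' : ℝ}
    (hΛ' : 0 < Λ') (hΛ : Λ' < Λ) (b : ℝ)
    (μΛ μΛ' μΛΛ' : Measure ((Fin d → ℤ) → ℝ))
    (hμΛ : IsProductGaussian μΛ (varCutoff Λ))
    (hμΛ' : IsProductGaussian μΛ' (varCutoff Λ'))
    (hμΛΛ' : IsProductGaussian μΛΛ' (varCutoffDiff Λ Λ'))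
    (S : ((Fin d → ℤ) → ℝ) → ℝ) (hSmeas : Measurable S)
    (hS2 : Integrable (fun χ => S χ ^ 2) μΛ)
    (hSb : ∀ᵐ χ ∂μΛ, b ≤ S χ) :
    (∀ᵐ ψ ∂μΛ', Integrable (fun φ => Real.exp (-S (φ + ψ))) μΛΛ' ∧
        0 < ∫ φ, Real.exp (-S (φ + ψ)) ∂μΛΛ') ∧
      (∀ᵐ ψ ∂μΛ', b ≤ integrateOut μΛΛ' S ψ) ∧
      Integrable (fun ψ => integrateOut μΛΛ' S ψ ^ 2) μΛ' ∧
      Real.sqrt (∫ ψ, integrateOut μΛΛ' S ψ ^ 2 ∂μΛ') ≤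
        |b| + Real.sqrt (∫ χ, S χ ^ 2 ∂μΛ) := by
  classical
  haveI hPΛ : IsProbabilityMeasure μΛ := hμΛ.isProbabilityMeasure
  haveI hPΛ' : IsProbabilityMeasure μΛ' := hμΛ'.isProbabilityMeasure
  haveI hPΛΛ' : IsProbabilityMeasure μΛΛ' := hμΛΛ'.isProbabilityMeasure
  have hadd : Measurable (fun p : ((Fin d → ℤ) → ℝ) × ((Fin d → ℤ) → ℝ) => p.1 + p.2) :=
    measurable_pi_lambda _ fun n =>
      ((measurable_pi_apply n).comp measurable_fst).add
        ((measurable_pi_apply n).comp measurable_snd)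
  have hA' : Measurable (fun p : ((Fin d → ℤ) → ℝ) × ((Fin d → ℤ) → ℝ) => p.2 + p.1) :=
    measurable_pi_lambda _ fun n =>
      ((measurable_pi_apply n).comp measurable_snd).add
        ((measurable_pi_apply n).comp measurable_fst)
  have hconv : IsProductGaussian
      (Measure.map (fun p => p.1 + p.2) (μΛΛ'.prod μΛ')) (varCutoff Λ) := by
    have h := hμΛΛ'.conv hμΛ'
    have he : (fun n => varCutoffDiff Λ Λ' n + varCutoff Λ' n) = varCutoff (d := d) Λ :=
      funext fun n => varCutoff_add hΛ' hΛ n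
    rwa [he] at h
  have hmap : Measure.map (fun p => p.1 + p.2) (μΛΛ'.prod μΛ') = μΛ := hconv.unique hμΛ
  have hmap' : Measure.map (fun p : ((Fin d → ℤ) → ℝ) × ((Fin d → ℤ) → ℝ) => p.2 + p.1)
      (μΛ'.prod μΛΛ') = μΛ := by
    have hsw : Measure.map Prod.swap (μΛ'.prod μΛΛ') = μΛΛ'.prod μΛ' := Measure.prod_swap
    rw [← hmap, ← hsw, Measure.map_map hadd measurable_swap]
    rfl
  have hSmeas2 : Measurable (fun χ => S χ ^ 2) := hSmeas.pow_const 2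
  have hshift : ∀ ψ : (Fin d → ℤ) → ℝ, Measurable (fun φ : (Fin d → ℤ) → ℝ => φ + ψ) :=
    fun ψ => measurable_pi_lambda _ fun n => (measurable_pi_apply n).add_const _
  -- transfer hypotheses to the product measure
  have h1 : ∀ᵐ p ∂(μΛ'.prod μΛΛ'), b ≤ S (p.2 + p.1) := by
    have h0 : ∀ᵐ χ ∂(Measure.map (fun p : ((Fin d → ℤ) → ℝ) × ((Fin d → ℤ) → ℝ) => p.2 + p.1)
        (μΛ'.prod μΛΛ')), b ≤ S χ := by rwa [hmap']
    exact (ae_map_iff hA'.aemeasurable (measurableSet_le measurable_const hSmeas)).1 h0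
  have h2 : Integrable (fun p : ((Fin d → ℤ) → ℝ) × ((Fin d → ℤ) → ℝ) => S (p.2 + p.1) ^ 2)
      (μΛ'.prod μΛΛ') := by
    have h0 : Integrable (fun χ => S χ ^ 2)
        (Measure.map (fun p : ((Fin d → ℤ) → ℝ) × ((Fin d → ℤ) → ℝ) => p.2 + p.1)
          (μΛ'.prod μΛΛ')) := by rwa [hmap']
    exact (integrable_map_measure hSmeas2.aestronglyMeasurable hA'.aemeasurable).1 h0
  have h1ae : ∀ᵐ ψ ∂μΛ', ∀ᵐ φ ∂μΛΛ', b ≤ S (φ + ψ) := Measure.ae_ae_of_ae_prod h1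
  have hint2ae : ∀ᵐ ψ ∂μΛ', Integrable (fun φ => S (φ + ψ) ^ 2) μΛΛ' := h2.prod_right_ae
  -- measurability of the parametrized integrals
  have hGsm : StronglyMeasurable (fun ψ => ∫ φ, Real.exp (-S (φ + ψ)) ∂μΛΛ') :=
    StronglyMeasurable.integral_prod_right'
      (f := fun q : ((Fin d → ℤ) → ℝ) × ((Fin d → ℤ) → ℝ) => Real.exp (-S (q.2 + q.1)))
      ((hSmeas.comp hA').neg.exp).stronglyMeasurable
  have hTsm : StronglyMeasurable (fun ψ => ∫ φ, S (φ + ψ) ∂μΛΛ') :=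
    StronglyMeasurable.integral_prod_right'
      (f := fun q : ((Fin d → ℤ) → ℝ) × ((Fin d → ℤ) → ℝ) => S (q.2 + q.1))
      (hSmeas.comp hA').stronglyMeasurable
  have hIeq : ∀ ψ, integrateOut μΛΛ' S ψ =
      -Real.log (∫ φ, Real.exp (-S (φ + ψ)) ∂μΛΛ') := fun _ => rfl
  -- the pointwise a.e. facts
  have key : ∀ᵐ ψ ∂μΛ',
      Integrable (fun φ => Real.exp (-S (φ + ψ))) μΛΛ' ∧
      (0 < ∫ φ, Real.exp (-S (φ + ψ)) ∂μΛΛ') ∧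
      b ≤ integrateOut μΛΛ' S ψ ∧
      |integrateOut μΛΛ' S ψ| ≤ |b| + |∫ φ, S (φ + ψ) ∂μΛΛ'| ∧
      (∫ φ, S (φ + ψ) ∂μΛΛ') ^ 2 ≤ ∫ φ, S (φ + ψ) ^ 2 ∂μΛΛ' := by
    filter_upwards [h1ae, hint2ae] with ψ hb hint2
    have hint1 : Integrable (fun φ => S (φ + ψ)) μΛΛ' := by
      have hg : Integrable (fun φ => 1 + S (φ + ψ) ^ 2) μΛΛ' := (integrable_const 1).add hint2
      refine hg.mono' ((hSmeas.comp (hshift ψ)).aestronglyMeasurable) (ae_of_all _ fun φ => ?_)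
      rw [Real.norm_eq_abs]
      nlinarith [sq_nonneg (|S (φ + ψ)| - 1), sq_abs (S (φ + ψ))]
    have hintexp : Integrable (fun φ => Real.exp (-S (φ + ψ))) μΛΛ' := by
      refine (integrable_const (Real.exp (-b))).mono'
        ((hSmeas.comp (hshift ψ)).neg.exp.aestronglyMeasurable) ?_
      filter_upwards [hb] with φ hφ
      rw [Real.norm_eq_abs, abs_of_pos (Real.exp_pos _)]
      exact Real.exp_le_exp.2 (neg_le_neg hφ)
    have hGpos : 0 < ∫ φ, Real.exp (-S (φ + ψ)) ∂μΛΛ' := by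
      refine (integral_pos_iff_support_of_nonneg (fun φ => (Real.exp_pos _).le) hintexp).2 ?_
      have hsupp : Function.support (fun φ => Real.exp (-S (φ + ψ))) = Set.univ :=
        Set.eq_univ_of_forall fun φ => (Real.exp_pos _).ne'
      rw [hsupp, measure_univ]
      exact one_pos
    have hGle : (∫ φ, Real.exp (-S (φ + ψ)) ∂μΛΛ') ≤ Real.exp (-b) := by
      have hmono := integral_mono_ae hintexp (integrable_const (Real.exp (-b)))
        (by filter_upwards [hb] with φ hφ; exact Real.exp_le_exp.2 (neg_le_neg hφ))
      simpa using hmono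
    have hbI : b ≤ integrateOut μΛΛ' S ψ := by
      have hlog : Real.log (∫ φ, Real.exp (-S (φ + ψ)) ∂μΛΛ') ≤ -b :=
        (Real.log_le_iff_le_exp hGpos).2 hGle
      rw [hIeq ψ]; linarith
    have hIT : integrateOut μΛΛ' S ψ ≤ ∫ φ, S (φ + ψ) ∂μΛΛ' := by
      set c : ℝ := -∫ φ, S (φ + ψ) ∂μΛΛ' with hc
      have hptw : ∀ φ, Real.exp c * ((-S (φ + ψ)) - c + 1) ≤ Real.exp (-S (φ + ψ)) := by
        intro φ
        have h := Real.add_one_le_exp ((-S (φ + ψ)) - c)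
        calc Real.exp c * ((-S (φ + ψ)) - c + 1)
            ≤ Real.exp c * Real.exp ((-S (φ + ψ)) - c) :=
              mul_le_mul_of_nonneg_left h (Real.exp_pos _).le
          _ = Real.exp (-S (φ + ψ)) := by rw [← Real.exp_add]; congr 1; ring
      have hintL : Integrable (fun φ => Real.exp c * ((-S (φ + ψ)) - c + 1)) μΛΛ' := by
        have : Integrable (fun φ => (-S (φ + ψ)) - c + 1) μΛΛ' :=
          (hint1.neg.sub (integrable_const c)).add (integrable_const 1)
        exact this.const_mul _
      have hle := integral_mono_ae hintL hintexp (ae_of_all _ hptw)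
      have hcalc : ∫ φ, Real.exp c * ((-S (φ + ψ)) - c + 1) ∂μΛΛ' = Real.exp c := by
        rw [integral_const_mul]
        have hsum : ∫ φ, ((-S (φ + ψ)) - c + 1) ∂μΛΛ' = 1 := by
          have hi2 : Integrable (fun φ => -S (φ + ψ)) μΛΛ' := hint1.neg
          have hi1 : Integrable (fun φ => (-S (φ + ψ)) - c) μΛΛ' :=
            hi2.sub (integrable_const c)
          rw [integral_add hi1 (integrable_const 1), integral_sub hi2 (integrable_const c),
            integral_neg, integral_const, integral_const]
          simp [hc]
        rw [hsum, mul_one]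
      rw [hcalc] at hle
      have hlog := (Real.le_log_iff_exp_le hGpos).2 hle
      rw [hIeq ψ]
      rw [hc] at hlog
      linarith
    have hTsq : (∫ φ, S (φ + ψ) ∂μΛΛ') ^ 2 ≤ ∫ φ, S (φ + ψ) ^ 2 ∂μΛΛ' :=
      sq_integral_le hint1 hint2
    have habs : |integrateOut μΛΛ' S ψ| ≤ |b| + |∫ φ, S (φ + ψ) ∂μΛΛ'| := by
      rcases le_or_gt 0 (integrateOut μΛΛ' S ψ) with h0 | h0
      · rw [abs_of_nonneg h0]
        calc integrateOut μΛΛ' S ψ ≤ ∫ φ, S (φ + ψ) ∂μΛΛ' := hIT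
          _ ≤ |∫ φ, S (φ + ψ) ∂μΛΛ'| := le_abs_self _
          _ ≤ |b| + |∫ φ, S (φ + ψ) ∂μΛΛ'| := le_add_of_nonneg_left (abs_nonneg _)
      · rw [abs_of_neg h0]
        calc -integrateOut μΛΛ' S ψ ≤ -b := by linarith
          _ ≤ |b| := neg_le_abs b
          _ ≤ |b| + |∫ φ, S (φ + ψ) ∂μΛΛ'| := le_add_of_nonneg_right (abs_nonneg _)
    exact ⟨hintexp, hGpos, hbI, habs, hTsq⟩
  -- global integrability
  have hintH : Integrable (fun ψ => ∫ φ, S (φ + ψ) ^ 2 ∂μΛΛ') μΛ' := h2.integral_prod_left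
  have hHeq : ∫ ψ, (∫ φ, S (φ + ψ) ^ 2 ∂μΛΛ') ∂μΛ' = ∫ χ, S χ ^ 2 ∂μΛ := by
    conv_rhs => rw [← hmap']
    rw [integral_map hA'.aemeasurable hSmeas2.aestronglyMeasurable]
    exact integral_integral h2
  have hintT2 : Integrable (fun ψ => (∫ φ, S (φ + ψ) ∂μΛΛ') ^ 2) μΛ' := by
    refine hintH.mono' ((hTsm.measurable.pow_const 2).aestronglyMeasurable) ?_
    filter_upwards [key] with ψ h
    rw [Real.norm_eq_abs, abs_of_nonneg (sq_nonneg _)]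
    exact h.2.2.2.2
  have hintabsT : Integrable (fun ψ => |∫ φ, S (φ + ψ) ∂μΛΛ'|) μΛ' := by
    have hg : Integrable (fun ψ => 1 + (∫ φ, S (φ + ψ) ∂μΛΛ') ^ 2) μΛ' :=
      (integrable_const 1).add hintT2
    refine hg.mono' (hTsm.measurable.abs.aestronglyMeasurable) (ae_of_all _ fun ψ => ?_)
    rw [Real.norm_eq_abs, abs_abs]
    nlinarith [sq_nonneg (|∫ φ, S (φ + ψ) ∂μΛΛ'| - 1), sq_abs (∫ φ, S (φ + ψ) ∂μΛΛ')]
  have hImeas : Measurable (fun ψ => integrateOut μΛΛ' S ψ) := by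
    have heq : (fun ψ => integrateOut μΛΛ' S ψ) =
        fun ψ => -Real.log (∫ φ, Real.exp (-S (φ + ψ)) ∂μΛΛ') := rfl
    rw [heq]
    exact (Real.measurable_log.comp hGsm.measurable).neg
  have hgexpand : (fun ψ => (|b| + |∫ φ, S (φ + ψ) ∂μΛΛ'|) ^ 2) =
      fun ψ => (b ^ 2 + (∫ φ, S (φ + ψ) ∂μΛΛ') ^ 2) + 2 * |b| * |∫ φ, S (φ + ψ) ∂μΛΛ'| := by
    ext ψ
    rw [add_sq, sq_abs, sq_abs]
    ring
  have hgbound : Integrable (fun ψ => (|b| + |∫ φ, S (φ + ψ) ∂μΛΛ'|) ^ 2) μΛ' := by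
    rw [hgexpand]
    exact ((integrable_const _).add hintT2).add (hintabsT.const_mul _)
  have hItoabs : ∀ᵐ ψ ∂μΛ',
      integrateOut μΛΛ' S ψ ^ 2 ≤ (|b| + |∫ φ, S (φ + ψ) ∂μΛΛ'|) ^ 2 := by
    filter_upwards [key] with ψ h
    rw [← sq_abs (integrateOut μΛΛ' S ψ)]
    exact pow_le_pow_left₀ (abs_nonneg _) h.2.2.2.1 2
  have hintI2 : Integrable (fun ψ => integrateOut μΛΛ' S ψ ^ 2) μΛ' := by
    refine hgbound.mono' ((hImeas.pow_const 2).aestronglyMeasurable) ?_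
    filter_upwards [hItoabs] with ψ h
    rwa [Real.norm_eq_abs, abs_of_nonneg (sq_nonneg _)]
  refine ⟨key.mono fun ψ h => ⟨h.1, h.2.1⟩, key.mono fun ψ h => h.2.2.1, hintI2, ?_⟩
  -- the norm estimate
  have hT2nn : 0 ≤ ∫ ψ, (∫ φ, S (φ + ψ) ∂μΛΛ') ^ 2 ∂μΛ' := integral_nonneg fun ψ => sq_nonneg _
  have e1 : ∫ ψ, integrateOut μΛΛ' S ψ ^ 2 ∂μΛ' ≤
      ∫ ψ, (|b| + |∫ φ, S (φ + ψ) ∂μΛΛ'|) ^ 2 ∂μΛ' :=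
    integral_mono_ae hintI2 hgbound hItoabs
  have e2 : ∫ ψ, |∫ φ, S (φ + ψ) ∂μΛΛ'| ∂μΛ' ≤
      Real.sqrt (∫ ψ, (∫ φ, S (φ + ψ) ∂μΛΛ') ^ 2 ∂μΛ') := by
    have habs2 : Integrable (fun ψ => |∫ φ, S (φ + ψ) ∂μΛΛ'| ^ 2) μΛ' := by
      simpa [sq_abs] using hintT2
    have h := sq_integral_le hintabsT habs2
    calc ∫ ψ, |∫ φ, S (φ + ψ) ∂μΛΛ'| ∂μΛ'
        = Real.sqrt ((∫ ψ, |∫ φ, S (φ + ψ) ∂μΛΛ'| ∂μΛ') ^ 2) :=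
          (Real.sqrt_sq (integral_nonneg fun ψ => abs_nonneg _)).symm
      _ ≤ Real.sqrt (∫ ψ, (∫ φ, S (φ + ψ) ∂μΛΛ') ^ 2 ∂μΛ') :=
          Real.sqrt_le_sqrt (by simpa [sq_abs] using h)
  have e3 : ∫ ψ, (|b| + |∫ φ, S (φ + ψ) ∂μΛΛ'|) ^ 2 ∂μΛ' ≤
      (|b| + Real.sqrt (∫ ψ, (∫ φ, S (φ + ψ) ∂μΛΛ') ^ 2 ∂μΛ')) ^ 2 := by
    have hAint : Integrable (fun ψ => b ^ 2 + (∫ φ, S (φ + ψ) ∂μΛΛ') ^ 2) μΛ' :=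
      (integrable_const _).add hintT2
    have hBint : Integrable (fun ψ => 2 * |b| * |∫ φ, S (φ + ψ) ∂μΛΛ'|) μΛ' :=
      hintabsT.const_mul _
    rw [hgexpand, integral_add hAint hBint,
      integral_add (integrable_const _) hintT2, integral_const, integral_const_mul]
    have hRsq : Real.sqrt (∫ ψ, (∫ φ, S (φ + ψ) ∂μΛΛ') ^ 2 ∂μΛ') ^ 2 =
        ∫ ψ, (∫ φ, S (φ + ψ) ∂μΛΛ') ^ 2 ∂μΛ' := Real.sq_sqrt hT2nn
    have hbb : |b| ^ 2 = b ^ 2 := sq_abs b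
    have he2' := mul_le_mul_of_nonneg_left e2 (by positivity : (0:ℝ) ≤ 2 * |b|)
    simp only [probReal_univ, measure_univ, ENNReal.toReal_one, one_smul, smul_eq_mul]
    nlinarith [hRsq, hbb]
  have e4 : ∫ ψ, (∫ φ, S (φ + ψ) ∂μΛΛ') ^ 2 ∂μΛ' ≤ ∫ χ, S χ ^ 2 ∂μΛ := by
    rw [← hHeq]
    exact integral_mono_ae hintT2 hintH (key.mono fun ψ h => h.2.2.2.2)
  calc Real.sqrt (∫ ψ, integrateOut μΛΛ' S ψ ^ 2 ∂μΛ')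
      ≤ Real.sqrt ((|b| + Real.sqrt (∫ ψ, (∫ φ, S (φ + ψ) ∂μΛΛ') ^ 2 ∂μΛ')) ^ 2) :=
        Real.sqrt_le_sqrt (e1.trans e3)
    _ = |b| + Real.sqrt (∫ ψ, (∫ φ, S (φ + ψ) ∂μΛΛ') ^ 2 ∂μΛ') :=
        Real.sqrt_sq (by positivity)
    _ ≤ |b| + Real.sqrt (∫ χ, S χ ^ 2 ∂μΛ) := by
        exact add_le_add_right (Real.sqrt_le_sqrt e4) _
end

section
/- Let N ≥ 1 be an integer, let f : ℝ^N → ℝ be continuous with f(x) ≥ 0 for all x, let 0 < r < R, and let ε > 0. Then there exist a finite set F ⊆ ℤ^N and coefficients c : F → ℂ such that the trigonometric polynomial T(x) = Re(∑_{k ∈ F} c(k)·exp(πi⟨k, x⟩/R)) satisfies: (i) T(x) ≥ 0 for all x ∈ ℝ^N; (ii) T(x) ≤ sup_{y ∈ [−R,R]^N} f(y) for all x ∈ ℝ^N; and (iii) |T(x) − f(x)| < ε for all x ∈ [−r, r]^N. -/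
open scoped Real
open Complex Set

namespace NonnegTrigAux

noncomputable def ee (R : ℝ) {N : ℕ} (k : Fin N → ℤ) :
    C((Fin N → AddCircle (2*R)), ℂ) :=
  ∏ j, (fourier (k j)).comp ⟨fun x => x j, continuous_apply j⟩

lemma ee_apply (R : ℝ) {N : ℕ} (k : Fin N → ℤ) (x : Fin N → AddCircle (2*R)) :
    ee R k x = ∏ j, fourier (k j) (x j) := by
  simp [ee]

lemma ee_zero (R : ℝ) {N : ℕ} : ee R (0 : Fin N → ℤ) = 1 := by
  ext x
  simp only [ee_apply, Pi.zero_apply, ContinuousMap.one_apply]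
  exact Finset.prod_eq_one fun j _ => fourier_zero

lemma ee_add (R : ℝ) {N : ℕ} (k l : Fin N → ℤ) : ee R (k + l) = ee R k * ee R l := by
  ext x
  simp only [ee_apply, ContinuousMap.mul_apply, Pi.add_apply, ← Finset.prod_mul_distrib]
  exact Finset.prod_congr rfl fun j _ => fourier_add

lemma ee_neg_eq_star (R : ℝ) {N : ℕ} (k : Fin N → ℤ) : ee R (-k) = star (ee R k) := by
  ext x
  simp only [ee_apply, ContinuousMap.star_apply, Pi.neg_apply]
  rw [star_prod]
  exact Finset.prod_congr rfl fun j _ => fourier_neg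

noncomputable def SA (R : ℝ) [Fact (0 < 2*R)] (N : ℕ) :
    StarSubalgebra ℂ C((Fin N → AddCircle (2*R)), ℂ) where
  toSubalgebra := Algebra.adjoin ℂ (Set.range (ee R (N := N)))
  star_mem' := by
    intro a ha
    have hset : star (Set.range (ee R (N := N))) = Set.range (ee R (N := N)) := by
      ext g
      simp only [Set.mem_star, Set.mem_range]
      constructor
      · rintro ⟨k, hk⟩
        exact ⟨-k, by rw [ee_neg_eq_star, hk, star_star]⟩
      · rintro ⟨k, hk⟩
        exact ⟨-k, by rw [← hk, ← ee_neg_eq_star]⟩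
    show star a ∈ Algebra.adjoin ℂ (Set.range (ee R (N := N)))
    rw [← Subalgebra.mem_star_iff, Subalgebra.star_adjoin_comm, hset]
    exact ha

lemma SA_coe (R : ℝ) [Fact (0 < 2*R)] (N : ℕ) :
    Subalgebra.toSubmodule (SA R N).toSubalgebra
      = Submodule.span ℂ (Set.range (ee R (N := N))) := by
  apply Algebra.adjoin_eq_span_of_subset
  refine Subset.trans ?_ Submodule.subset_span
  intro x hx
  refine Submonoid.closure_induction (fun _ => id) ⟨0, ee_zero R⟩ ?_ hx
  rintro - - - - ⟨m, rfl⟩ ⟨n, rfl⟩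
  exact ⟨m + n, ee_add R m n⟩

lemma SA_separates (R : ℝ) [Fact (0 < 2*R)] (N : ℕ) : (SA R N).SeparatesPoints := by
  intro x y hxy
  obtain ⟨j, hj⟩ : ∃ j, x j ≠ y j := by
    by_contra hcon
    push_neg at hcon
    exact hxy (funext hcon)
  refine ⟨_, ⟨ee R (Pi.single j 1), Algebra.subset_adjoin ⟨Pi.single j 1, rfl⟩, rfl⟩, ?_⟩
  have key : ∀ z : Fin N → AddCircle (2*R), ee R (Pi.single j 1) z = fourier 1 (z j) := by
    intro z
    rw [ee_apply, Finset.prod_eq_single j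
      (fun b _ hb => by rw [Pi.single_eq_of_ne hb]; exact fourier_zero)
      (fun hj' => absurd (Finset.mem_univ j) hj')]
    rw [Pi.single_eq_same]
  dsimp only
  rw [key, key, fourier_one, fourier_one]
  have h2R : (2*R) ≠ 0 := ne_of_gt (Fact.out)
  intro hcon
  exact hj (AddCircle.injective_toCircle h2R (by rwa [Circle.coe_inj] at hcon))

lemma exists_trig_approx (R : ℝ) [Fact (0 < 2*R)] (N : ℕ)
    (h : C((Fin N → AddCircle (2*R)), ℂ)) (δ : ℝ) (hδ : 0 < δ) :
    ∃ (s : Finset (Fin N → ℤ)) (c : (Fin N → ℤ) → ℂ),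
      ∀ z, ‖(∑ k ∈ s, c k * ee R k z) - h z‖ < δ := by
  have htop := ContinuousMap.starSubalgebra_topologicalClosure_eq_top_of_separatesPoints
    (SA R N) (SA_separates R N)
  have hmem : h ∈ (SA R N).topologicalClosure := by rw [htop]; exact StarSubalgebra.mem_top
  have hcl : h ∈ closure ((SA R N) : Set C((Fin N → AddCircle (2*R)), ℂ)) := hmem
  obtain ⟨P, hPmem, hPd⟩ := Metric.mem_closure_iff.mp hcl δ hδ
  have hPspan : P ∈ Submodule.span ℂ (Set.range (ee R (N := N))) := by
    rw [← SA_coe]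
    exact hPmem
  obtain ⟨cf, hcf⟩ := Finsupp.mem_span_range_iff_exists_finsupp.mp hPspan
  refine ⟨cf.support, cf, fun z => ?_⟩
  have hz : ∑ k ∈ cf.support, cf k * ee R k z = P z := by
    have := congrArg (fun F : C((Fin N → AddCircle (2*R)), ℂ) => F z) hcf
    simpa [Finsupp.sum, smul_eq_mul] using this
  rw [hz]
  calc ‖P z - h z‖ = dist (h z) (P z) := by rw [dist_comm, dist_eq_norm]
  _ ≤ dist h P := ContinuousMap.dist_apply_le_dist z
  _ < δ := hPd


lemma final_est (M δ ε q fx σ : ℝ) (hδe : δ = ε/4) (hδ : 0 < δ)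
    (hσ0 : 0 ≤ σ) (hσ1 : σ ≤ 1) (hσM : σ * (M + 2*δ) = M)
    (h1 : -δ < q - fx) (h2 : q - fx < δ) (hfle : fx ≤ M) (hf0 : 0 ≤ fx) :
    |σ * (q + δ) - fx| < ε := by
  rw [abs_lt]
  constructor
  · nlinarith [mul_nonneg hσ0 (show (0:ℝ) ≤ q + δ - fx by linarith),
      mul_nonneg (show (0:ℝ) ≤ 1 - σ by linarith) (show (0:ℝ) ≤ M - fx by linarith),
      mul_nonneg (show (0:ℝ) ≤ 1 - σ by linarith) hδ.le]
  · nlinarith [mul_nonneg hσ0 (show (0:ℝ) ≤ fx + 2*δ - (q + δ) by linarith),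
      mul_nonneg (show (0:ℝ) ≤ 1 - σ by linarith) hf0,
      mul_nonneg (show (0:ℝ) ≤ 1 - σ by linarith) hδ.le]
end NonnegTrigAux

open NonnegTrigAux in
/-- Approximation of a continuous nonnegative function by a nonnegative trigonometric
polynomial of period `2R` in each variable which is everywhere dominated by the supremum
of `f` on the box `[−R,R]^N` and uniformly `ε`-close to `f` on the smaller box
`[−r,r]^N`. -/
theorem nonneg_trig_poly_approximation (N : ℕ) (hN : 1 ≤ N)
    (f : (Fin N → ℝ) → ℝ) (hf : Continuous f) (hf0 : ∀ x, 0 ≤ f x)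
    (r R : ℝ) (hr : 0 < r) (hrR : r < R) (ε : ℝ) (hε : 0 < ε) :
    ∃ (F : Finset (Fin N → ℤ)) (c : (Fin N → ℤ) → ℂ) (T : (Fin N → ℝ) → ℝ),
      (∀ x : Fin N → ℝ,
        T x = (∑ k ∈ F, c k *
          Complex.exp (Real.pi * Complex.I * (∑ j, (k j : ℂ) * (x j : ℂ)) / (R : ℂ))).re) ∧
      (∀ x : Fin N → ℝ, 0 ≤ T x) ∧
      (∀ x : Fin N → ℝ,
        T x ≤ sSup (f '' Set.Icc (fun _ => -R) (fun _ => R))) ∧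
      ∀ x ∈ Set.Icc (fun _ => -r : Fin N → ℝ) (fun _ => r), |T x - f x| < ε := by
  haveI : Fact (0 < 2*R) := ⟨by linarith⟩
  have hR0 : 0 < R := hr.trans hrR
  set BB : Set (Fin N → ℝ) := Set.Icc (fun _ => -R) (fun _ => R) with hBBdef
  set M : ℝ := sSup (f '' BB) with hMdef
  have hBBc : IsCompact BB := isCompact_Icc
  have hbdd : BddAbove (f '' BB) := (hBBc.image hf).bddAbove
  have hfM : ∀ y ∈ BB, f y ≤ M := fun y hy => le_csSup hbdd ⟨y, hy, rfl⟩
  have h0BB : (fun _ => (0:ℝ)) ∈ BB := by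
    refine ⟨fun j => ?_, fun j => ?_⟩ <;> · simp only []; linarith
  have hM0 : 0 ≤ M := le_trans (hf0 _) (hfM _ h0BB)
  have hsub : Set.Icc (fun _ => -r : Fin N → ℝ) (fun _ => r) ⊆ BB := by
    refine Set.Icc_subset_Icc (fun j => ?_) (fun j => ?_) <;> · simp only []; linarith
  -- the quotient map to the torus
  set pr : (Fin N → ℝ) → (Fin N → AddCircle (2*R)) := fun x j => (x j : AddCircle (2*R))
    with hprdef
  have hpr : Continuous pr :=
    continuous_pi fun j => Continuous.comp (AddCircle.continuous_mk' (2*R)) (continuous_apply j)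
  -- `pr` is injective on the small box
  have hι_inj : Function.Injective
      (fun y : Set.Icc (fun _ => -r : Fin N → ℝ) (fun _ => r) => pr (y : Fin N → ℝ)) := by
    rintro ⟨a, ha⟩ ⟨b, hb⟩ hab
    have h2 : -R + 2*R = R := by ring
    refine Subtype.ext (funext fun j => ?_)
    have hj : ((a j : ℝ) : AddCircle (2*R)) = ((b j : ℝ) : AddCircle (2*R)) :=
      congrFun hab j
    have ha1 : -r ≤ a j := ha.1 j
    have ha2 : a j ≤ r := ha.2 j
    have hb1 : -r ≤ b j := hb.1 j
    have hb2 : b j ≤ r := hb.2 j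
    have hmema : a j ∈ Set.Ico (-R) (-R + 2*R) := by
      rw [h2]; exact ⟨by linarith, by linarith⟩
    have hmemb : b j ∈ Set.Ico (-R) (-R + 2*R) := by
      rw [h2]; exact ⟨by linarith, by linarith⟩
    exact (AddCircle.coe_eq_coe_iff_of_mem_Ico hmema hmemb).mp hj
  haveI : CompactSpace (Set.Icc (fun _ => -r : Fin N → ℝ) (fun _ => r)) :=
    isCompact_iff_compactSpace.mp isCompact_Icc
  have hemb : Topology.IsClosedEmbedding
      (fun y : Set.Icc (fun _ => -r : Fin N → ℝ) (fun _ => r) => pr (y : Fin N → ℝ)) :=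
    (hpr.comp continuous_subtype_val).isClosedEmbedding hι_inj
  -- Tietze extension of `f` from the small box to the torus
  obtain ⟨g, hg⟩ := ContinuousMap.exists_extension hemb
    ⟨fun y : Set.Icc (fun _ => -r : Fin N → ℝ) (fun _ => r) => f y,
      hf.comp continuous_subtype_val⟩
  have hgf : ∀ y : Set.Icc (fun _ => -r : Fin N → ℝ) (fun _ => r), g (pr y) = f y :=
    fun y => by simpa using DFunLike.congr_fun hg y
  -- clamp the extension to `[0, M]`
  set g' : (Fin N → AddCircle (2*R)) → ℝ := fun z => max 0 (min (g z) M) with hg'def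
  have hg'c : Continuous g' := continuous_const.max ((map_continuous g).min continuous_const)
  have hg'0 : ∀ z, 0 ≤ g' z := fun z => le_max_left _ _
  have hg'M : ∀ z, g' z ≤ M := fun z => max_le hM0 (min_le_right _ _)
  have hg'f : ∀ x (hx : x ∈ Set.Icc (fun _ => -r : Fin N → ℝ) (fun _ => r)),
      g' (pr x) = f x := by
    intro x hx
    have h1 : g (pr x) = f x := hgf ⟨x, hx⟩
    rw [hg'def]
    simp only []
    rw [h1, min_eq_left (hfM x (hsub hx)), max_eq_right (hf0 x)]
  -- trigonometric approximation of the clamped extension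
  set δ : ℝ := ε/4 with hδdef
  have hδ : 0 < δ := by positivity
  obtain ⟨s, c, hsc⟩ := exists_trig_approx R N
    ⟨fun z => ((g' z : ℝ) : ℂ), Complex.continuous_ofReal.comp hg'c⟩ δ hδ
  set Pz : (Fin N → AddCircle (2*R)) → ℂ := fun z => ∑ k ∈ s, c k * ee R k z with hPzdef
  -- symmetrize to get a real-valued trigonometric polynomial
  set F : Finset (Fin N → ℤ) := s ∪ s.image (fun k => -k) with hFdef
  have hFs : s ⊆ F := Finset.subset_union_left
  set c₁ : (Fin N → ℤ) → ℂ := fun k =>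
    ((if k ∈ s then c k else 0) + (starRingEnd ℂ) (if -k ∈ s then c (-k) else 0))/2
    with hc₁def
  have hA : ∀ z, ∑ k ∈ F, (if k ∈ s then c k else 0) * ee R k z = Pz z := by
    intro z
    rw [← Finset.sum_subset hFs (fun k _ hk => by rw [if_neg hk, zero_mul])]
    exact Finset.sum_congr rfl fun k hk => by rw [if_pos hk]
  have hFneg : ∀ k ∈ F, -k ∈ F := by
    intro k hk
    rcases Finset.mem_union.mp hk with h | h
    · exact Finset.mem_union.mpr (Or.inr (Finset.mem_image.mpr ⟨k, h, rfl⟩))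
    · obtain ⟨a, ha, rfl⟩ := Finset.mem_image.mp h
      exact Finset.mem_union.mpr (Or.inl (by rwa [neg_neg]))
  have hB : ∀ z, ∑ k ∈ F, (starRingEnd ℂ) (if -k ∈ s then c (-k) else 0) * ee R k z
      = (starRingEnd ℂ) (Pz z) := by
    intro z
    have hstar : ∀ k, ee R (-k) z = (starRingEnd ℂ) (ee R k z) := by
      intro k
      rw [ee_neg_eq_star]
      rfl
    have step1 : ∑ k ∈ F, (starRingEnd ℂ) (if -k ∈ s then c (-k) else 0) * ee R k z
        = ∑ k ∈ F, (starRingEnd ℂ) (if k ∈ s then c k else 0) * ee R (-k) z := by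
      refine Finset.sum_nbij' (fun k => -k) (fun k => -k)
        (fun a ha => hFneg a ha) (fun a ha => hFneg a ha)
        (fun a _ => neg_neg a) (fun a _ => neg_neg a) (fun a _ => by rw [neg_neg])
    rw [step1]
    calc ∑ k ∈ F, (starRingEnd ℂ) (if k ∈ s then c k else 0) * ee R (-k) z
        = ∑ k ∈ F, (starRingEnd ℂ) ((if k ∈ s then c k else 0) * ee R k z) := by
          refine Finset.sum_congr rfl fun k _ => ?_
          rw [hstar, map_mul]
      _ = (starRingEnd ℂ) (∑ k ∈ F, (if k ∈ s then c k else 0) * ee R k z) :=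
          (map_sum _ _ _).symm
      _ = (starRingEnd ℂ) (Pz z) := by rw [hA]
  have hQ : ∀ z, ∑ k ∈ F, c₁ k * ee R k z = (((Pz z).re : ℝ) : ℂ) := by
    intro z
    have hsplit : ∑ k ∈ F, c₁ k * ee R k z
        = (∑ k ∈ F, (if k ∈ s then c k else 0) * ee R k z
           + ∑ k ∈ F, (starRingEnd ℂ) (if -k ∈ s then c (-k) else 0) * ee R k z)/2 := by
      rw [← Finset.sum_add_distrib, Finset.sum_div]
      refine Finset.sum_congr rfl fun k _ => ?_
      rw [hc₁def]
      ring
    rw [hsplit, hA, hB, Complex.add_conj]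
    push_cast
    ring
  -- pointwise closeness of the real part
  have hnear : ∀ z, |(Pz z).re - g' z| < δ := by
    intro z
    have h1 := hsc z
    have h2 : (Pz z).re - g' z = (Pz z - ((g' z : ℝ) : ℂ)).re := by
      simp [Complex.sub_re, Complex.ofReal_re]
    rw [h2]
    exact lt_of_le_of_lt (Complex.abs_re_le_norm _) h1
  -- rescale
  set σ : ℝ := M/(M + 2*δ) with hσdef
  have hMδ : 0 < M + 2*δ := by linarith
  have hσ0 : 0 ≤ σ := div_nonneg hM0 hMδ.le
  have hσ1 : σ ≤ 1 := (div_le_one hMδ).mpr (by linarith)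
  have hσM : σ * (M + 2*δ) = M := div_mul_cancel₀ M hMδ.ne'
  refine ⟨insert 0 F,
    fun k => (σ : ℂ) * (if k ∈ F then c₁ k else 0) + (if k = 0 then ((σ*δ : ℝ) : ℂ) else 0),
    fun x => σ * ((Pz (pr x)).re + δ), ?_, ?_, ?_, ?_⟩
  · -- representation as a trigonometric polynomial
    intro x
    have hRne : (R : ℂ) ≠ 0 := by
      exact_mod_cast hR0.ne'
    have hEE : ∀ k : Fin N → ℤ, ee R k (pr x)
        = Complex.exp (Real.pi * Complex.I * (∑ j, (k j : ℂ) * (x j : ℂ)) / (R : ℂ)) := by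
      intro k
      rw [ee_apply]
      have hterm : ∀ j : Fin N, fourier (k j) ((x j : ℝ) : AddCircle (2*R))
          = Complex.exp (Real.pi * Complex.I * ((k j : ℂ) * (x j : ℂ)) / (R : ℂ)) := by
        intro j
        rw [fourier_coe_apply]
        congr 1
        have h2Rne : ((2*R : ℝ) : ℂ) ≠ 0 := by
          exact_mod_cast (by linarith : (2*R : ℝ) ≠ 0)
        push_cast
        field_simp
      rw [Finset.prod_congr rfl (fun j _ => hterm j), ← Complex.exp_sum]
      congr 1
      rw [← Finset.sum_div, ← Finset.mul_sum]
    have main : (∑ k ∈ insert 0 F,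
        ((σ : ℂ) * (if k ∈ F then c₁ k else 0) + (if k = 0 then ((σ*δ : ℝ) : ℂ) else 0))
          * ee R k (pr x))
        = (((σ * ((Pz (pr x)).re + δ) : ℝ)) : ℂ) := by
      simp only [add_mul]
      rw [Finset.sum_add_distrib]
      have p1 : ∑ k ∈ insert 0 F, (σ : ℂ) * (if k ∈ F then c₁ k else 0) * ee R k (pr x)
          = (σ : ℂ) * ∑ k ∈ F, c₁ k * ee R k (pr x) := by
        rw [Finset.mul_sum,
          ← Finset.sum_subset (Finset.subset_insert 0 F)
            (fun k _ hk => by rw [if_neg hk, mul_zero, zero_mul])]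
        exact Finset.sum_congr rfl fun k hk => by rw [if_pos hk, mul_assoc]
      have p2 : ∑ k ∈ insert 0 F, (if k = 0 then ((σ*δ : ℝ) : ℂ) else 0) * ee R k (pr x)
          = ((σ*δ : ℝ) : ℂ) := by
        rw [Finset.sum_congr rfl
          (fun k _ => by rw [ite_mul, zero_mul]),
          Finset.sum_ite_eq' (insert 0 F) 0 (fun k => ((σ*δ : ℝ) : ℂ) * ee R k (pr x)),
          if_pos (Finset.mem_insert_self 0 F), ee_zero]
        simp
      rw [p1, p2, hQ]
      push_cast
      ring
    have hrw : (∑ k ∈ insert 0 F,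
        ((σ : ℂ) * (if k ∈ F then c₁ k else 0) + (if k = 0 then ((σ*δ : ℝ) : ℂ) else 0)) *
          Complex.exp (Real.pi * Complex.I * (∑ j, (k j : ℂ) * (x j : ℂ)) / (R : ℂ)))
        = (((σ * ((Pz (pr x)).re + δ) : ℝ)) : ℂ) := by
      rw [← main]
      exact Finset.sum_congr rfl fun k _ => by rw [hEE k]
    rw [hrw, Complex.ofReal_re]
  · -- nonnegativity
    intro x
    have h1 := abs_lt.mp (hnear (pr x))
    have h2 := hg'0 (pr x)
    have : 0 ≤ (Pz (pr x)).re + δ := by linarith [h1.1, h1.2]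
    exact mul_nonneg hσ0 this
  · -- upper bound by the sup
    intro x
    have h1 := abs_lt.mp (hnear (pr x))
    have h2 := hg'M (pr x)
    have h3 : (Pz (pr x)).re + δ ≤ M + 2*δ := by linarith [h1.2]
    calc σ * ((Pz (pr x)).re + δ) ≤ σ * (M + 2*δ) := mul_le_mul_of_nonneg_left h3 hσ0
      _ = M := hσM
  · -- closeness on the small box
    intro x hx
    have hfx : g' (pr x) = f x := hg'f x hx
    have h1 := abs_lt.mp (hnear (pr x))
    rw [hfx] at h1
    have hfle : f x ≤ M := hfM x (hsub hx)
    have hf0x : 0 ≤ f x := hf0 x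
    show |σ * ((Pz (pr x)).re + δ) - f x| < ε
    exact final_est M δ ε ((Pz (pr x)).re) (f x) σ hδdef hδ hσ0 hσ1 hσM h1.1 h1.2 hfle hf0x
end
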